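/- arXiv:2503.16884 — 2 statements merged into one kernel-verified Lean document; each statement's English description precedes it below -/
import Mathlib

section
/- For q ≥ 2, the equation 1 + q·σ(q - 1) = 2q(q - 1) has no solutions; hence no affine group Aff(F_q) is Leinster. -/
/-- Sum of the orders of all normal subgroups of `G`. -/
noncomputable def D (G : Type*) [Group G] : ℕ :=
  ∑ᶠ N ∈ {N : Subgroup G | N.Normal}, Nat.card N

def AddAut.toMulAutMultiplicative (α : Type*) [AddGroup α] :
    Multiplicative (AddAut α) →* MulAut (Multiplicative α) where
  toFun f := AddEquiv.toMultiplicative (Multiplicative.toAdd f)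
  map_one' := rfl
  map_mul' _ _ := rfl

/-- The affine group `F ⋊ Fˣ` of a field `F`. -/
abbrev AffGroup (F : Type*) [Field F] :=
  SemidirectProduct (Multiplicative F) Fˣ
    ((AddAut.toMulAutMultiplicative F).comp (DistribMulAction.toAddAut Fˣ F))

section aux

variable {F : Type} [Field F] [Fintype F]

lemma aff_finite : Finite (AffGroup F) := by
  apply Finite.of_injective (fun g : AffGroup F => (g.left, g.right))
  intro a b h
  simp only [Prod.mk.injEq] at h
  exact SemidirectProduct.ext h.1 h.2

lemma phi_apply (b : Fˣ) (a : Multiplicative F) :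
    ((AddAut.toMulAutMultiplicative F).comp (DistribMulAction.toAddAut Fˣ F)) b a
      = Multiplicative.ofAdd ((b : F) * a.toAdd) := rfl

lemma key (N : Subgroup (AffGroup F)) (hN : N.Normal) (hbot : N ≠ ⊥) :
    (SemidirectProduct.inl : Multiplicative F →* AffGroup F).range ≤ N := by
  obtain ⟨g, hg, hg1⟩ : ∃ g ∈ N, g ≠ 1 := by
    by_contra hcon
    push_neg at hcon
    exact hbot (le_antisymm (fun x hx => by simpa using hcon x hx) bot_le)
  rintro _ ⟨x, rfl⟩
  by_cases hb : g.right = 1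
  · -- g = inl g.left with g.left ≠ 1
    have hgeq : g = SemidirectProduct.inl g.left := SemidirectProduct.ext rfl hb
    have ha : Multiplicative.toAdd g.left ≠ 0 := by
      intro h0
      apply hg1
      rw [hgeq]
      have : g.left = 1 := by
        simpa using congrArg Multiplicative.ofAdd h0
      rw [this, map_one]
    by_cases hx0 : Multiplicative.toAdd x = 0
    · have : x = 1 := by simpa using congrArg Multiplicative.ofAdd hx0
      rw [this, map_one]; exact one_mem N
    · set c : Fˣ := Units.mk0 (Multiplicative.toAdd x / Multiplicative.toAdd g.left)
        (div_ne_zero hx0 ha) with hc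
      have : (SemidirectProduct.inl x : AffGroup F) =
          SemidirectProduct.inr c * g * (SemidirectProduct.inr c)⁻¹ := by
        rw [hgeq, ← map_inv, ← SemidirectProduct.inl_aut, phi_apply]
        congr 1
        simp [hc, div_mul_cancel₀ _ ha]
      rw [this]
      exact hN.conj_mem g hg _
  · -- commutator trick
    set b := g.right
    have hbne : (b : F) ≠ 1 := fun h => hb (Units.ext h)
    set y : Multiplicative F := Multiplicative.ofAdd (Multiplicative.toAdd x / (1 - (b : F)))
    have : (SemidirectProduct.inl x : AffGroup F) =
        (SemidirectProduct.inl y * g * (SemidirectProduct.inl y)⁻¹) * g⁻¹ := by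
      apply SemidirectProduct.ext
      · simp only [SemidirectProduct.mul_left, SemidirectProduct.inv_left,
          SemidirectProduct.mul_right, SemidirectProduct.inv_right,
          phi_apply,
          SemidirectProduct.left_inl, SemidirectProduct.right_inl]
        apply Multiplicative.toAdd.injective
        simp only [toAdd_mul, toAdd_inv, toAdd_ofAdd, Units.val_one, one_mul,
          mul_one, mul_inv_cancel, Units.val_mul, y]
        have h1b : (1:F) - (b:F) ≠ 0 := sub_ne_zero.mpr (Ne.symm hbne)
        simp only [inv_one, Units.val_one, mul_one, Units.val_inv_eq_inv_val,
          show (g.right : F) = b from rfl]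
        field_simp
        ring
      · simp
    rw [this]
    exact mul_mem (hN.conj_mem g hg _) (inv_mem hg)

end aux

theorem no_leinster_affine :
    (∀ q : ℕ, 2 ≤ q → 1 + q * ArithmeticFunction.sigma 1 (q - 1) ≠ 2 * q * (q - 1)) ∧
    (∀ (F : Type) [Field F] [Fintype F], D (AffGroup F) ≠ 2 * Nat.card (AffGroup F)) := by
  constructor
  · intro q hq h
    set s := ArithmeticFunction.sigma 1 (q - 1)
    have h1 : q ∣ 2 * q * (q - 1) := ⟨2 * (q - 1), by ring⟩
    have h2 : q ∣ q * s := Dvd.intro _ rfl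
    have h3 : q ∣ 2 * q * (q - 1) - q * s := Nat.dvd_sub h1 h2
    obtain ⟨a, ha⟩ := h1
    obtain ⟨b, hb⟩ := h2
    have he : 2 * q * (q - 1) - q * s = 1 := by omega
    rw [he] at h3
    have := Nat.le_of_dvd one_pos h3
    omega
  · intro F _ _ h
    classical
    have : Finite (AffGroup F) := aff_finite
    set q := Fintype.card F with hqdef
    have hq : 2 ≤ q := Fintype.one_lt_card
    have hK : Nat.card (SemidirectProduct.inl :
        Multiplicative F →* AffGroup F).range = q := by
      have := Nat.card_congr
        (Equiv.ofInjective _ (SemidirectProduct.inl_injective (φ :=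
          (AddAut.toMulAutMultiplicative F).comp (DistribMulAction.toAddAut Fˣ F)))).symm
      have h2 : Nat.card (Multiplicative F) = q := by
        rw [Nat.card_eq_fintype_card]
        exact Fintype.card_multiplicative F
      exact this.trans h2
    have hqG : q ∣ Nat.card (AffGroup F) := by
      rw [← hK]
      exact Subgroup.card_subgroup_dvd_card _
    have hfin : {N : Subgroup (AffGroup F) | N.Normal}.Finite := Set.toFinite _
    have hD : D (AffGroup F) = ∑ N ∈ hfin.toFinset, Nat.card N :=
      finsum_mem_eq_finite_toFinset_sum _ hfin
    have hbotm : (⊥ : Subgroup (AffGroup F)) ∈ hfin.toFinset := by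
      rw [Set.Finite.mem_toFinset]
      show (⊥ : Subgroup (AffGroup F)).Normal
      infer_instance
    have hsplit : D (AffGroup F) =
        1 + ∑ N ∈ hfin.toFinset.erase ⊥, Nat.card N := by
      rw [hD, ← Finset.add_sum_erase _ _ hbotm, Subgroup.card_bot]
    have hdvd : q ∣ ∑ N ∈ hfin.toFinset.erase ⊥, Nat.card N := by
      refine Finset.dvd_sum fun N hNm => ?_
      rw [Finset.mem_erase, Set.Finite.mem_toFinset] at hNm
      rw [← hK]
      exact Subgroup.card_dvd_of_le (key N hNm.2 hNm.1)
    obtain ⟨k, hk⟩ := hdvd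
    obtain ⟨m, hm⟩ : q ∣ 2 * Nat.card (AffGroup F) := hqG.mul_left 2
    rw [hsplit, hk, hm] at h
    have h1 : q ∣ q * m - q * k := Nat.dvd_sub ⟨m, rfl⟩ ⟨k, rfl⟩
    have he : q * m - q * k = 1 := by omega
    rw [he] at h1
    have := Nat.le_of_dvd one_pos h1
    omega
end

section
/- For the dicyclic group Dic_{4n} of order 4n with n odd, D(Dic_{4n}) = σ(2n) + 4n; consequently Dic_{4n} is Leinster if and only if σ(2n) = 4n, i.e., 2n is a perfect number. In particular Dic_{12} (n = 3) is Leinster. -/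
open Subgroup

section CyclicSum

variable {G : Type*} [Group G] [Finite G] [IsCyclic G]

lemma mem_iff_pow_card_subgroup (H : Subgroup G) (x : G) :
    x ∈ H ↔ x ^ (Nat.card H) = 1 := by
  classical
  haveI := Fintype.ofFinite G
  set d := Nat.card H with hd
  have hd0 : 0 < d := Nat.card_pos
  set S : Finset G := Finset.univ.filter (fun x => x ^ d = 1) with hS
  have hcardS : S.card ≤ d := IsCyclic.card_pow_eq_one_le hd0
  have hsub : (H : Set G).toFinset ⊆ S := by
    intro y hy
    simp only [Set.mem_toFinset, SetLike.mem_coe] at hy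
    simp only [hS, Finset.mem_filter, Finset.mem_univ, true_and]
    have : (⟨y, hy⟩ : H) ^ d = 1 := pow_card_eq_one'
    simpa [SubmonoidClass.coe_pow] using congrArg (Subtype.val) this
  have hcardH : (H : Set G).toFinset.card = d := by
    rw [Set.toFinset_card]
    simp [hd, Nat.card_eq_fintype_card]
  have heq : (H : Set G).toFinset = S :=
    Finset.eq_of_subset_of_card_le hsub (by omega)
  constructor
  · intro hx
    have : x ∈ S := heq ▸ (by simpa using hx)
    simpa [hS] using this
  · intro hx
    have : x ∈ S := by simp [hS, hx]
    rw [← heq] at this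
    simpa using this

lemma subgroup_eq_of_card_eq {H K : Subgroup G} (h : Nat.card H = Nat.card K) : H = K := by
  ext x
  rw [mem_iff_pow_card_subgroup, mem_iff_pow_card_subgroup, h]

lemma exists_subgroup_card_eq {d : ℕ} (hd : d ∣ Nat.card G) : ∃ H : Subgroup G, Nat.card H = d := by
  obtain ⟨g, hg⟩ := IsCyclic.exists_generator (α := G)
  have hord : orderOf g = Nat.card G := orderOf_eq_card_of_forall_mem_zpowers hg
  refine ⟨zpowers (g ^ (Nat.card G / d)), ?_⟩
  rw [Nat.card_zpowers, orderOf_pow, hord]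
  have hdvd : Nat.card G / d ∣ Nat.card G := Nat.div_dvd_of_dvd hd
  rw [Nat.gcd_eq_right hdvd]
  exact Nat.div_div_self hd Nat.card_pos.ne'

lemma sum_card_subgroups :
    ∑ᶠ H : Subgroup G, Nat.card H = ∑ d ∈ (Nat.card G).divisors, d := by
  classical
  haveI : Finite (Subgroup G) :=
    Finite.of_injective (fun H : Subgroup G => (H : Set G)) SetLike.coe_injective
  haveI : Fintype (Subgroup G) := Fintype.ofFinite _
  rw [finsum_eq_sum_of_fintype]
  refine Finset.sum_bij (fun H _ => Nat.card H) ?_ ?_ ?_ ?_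
  · intro H _
    simp only [Nat.mem_divisors]
    exact ⟨Subgroup.card_subgroup_dvd_card H, Nat.card_pos.ne'⟩
  · intro H _ K _ h
    exact subgroup_eq_of_card_eq h
  · intro d hd
    obtain ⟨H, hH⟩ := exists_subgroup_card_eq (Nat.mem_divisors.mp hd).1
    exact ⟨H, Finset.mem_univ _, hH⟩
  · intro H _
    rfl

end CyclicSum

open Subgroup QuaternionGroup

variable {n : ℕ}

lemma a_inv (i : ZMod (2 * n)) : (a i : QuaternionGroup n)⁻¹ = a (-i) := by
  rw [eq_comm, eq_inv_iff_mul_eq_one, a_mul_a, neg_add_cancel, one_def]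

lemma xa_inv (i : ZMod (2 * n)) : (xa i : QuaternionGroup n)⁻¹ = xa ((n : ZMod (2 * n)) + i) := by
  rw [eq_comm, eq_inv_iff_mul_eq_one, xa_mul_xa, one_def]
  congr 1
  ring

lemma a_pow (c : ZMod (2 * n)) (k : ℕ) :
    (a c : QuaternionGroup n) ^ k = a ((k : ZMod (2 * n)) * c) := by
  induction k with
  | zero => simp
  | succ k ih =>
    rw [pow_succ, ih, a_mul_a]
    congr 1
    push_cast
    ring

lemma mem_zpowers_a_iff [NeZero n] (g : QuaternionGroup n) :
    g ∈ zpowers (a 1 : QuaternionGroup n) ↔ ∃ i, g = a i := by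
  constructor
  · rintro ⟨k, rfl⟩
    induction k using Int.rec with
    | ofNat m =>
      refine ⟨m, ?_⟩
      show (a 1 : QuaternionGroup n) ^ (Int.ofNat m) = a m
      rw [Int.ofNat_eq_coe, zpow_natCast, a_one_pow]
    | negSucc m =>
      refine ⟨-((m : ZMod (2*n))+1), ?_⟩
      show (a 1 : QuaternionGroup n) ^ (Int.negSucc m) = a (-((m : ZMod (2*n))+1))
      rw [zpow_negSucc, a_one_pow, a_inv]
      push_cast
      ring_nf
  · rintro ⟨i, rfl⟩
    refine ⟨(i.val : ℤ), ?_⟩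
    show (a 1 : QuaternionGroup n) ^ (i.val : ℤ) = a i
    rw [zpow_natCast, a_one_pow, ZMod.natCast_zmod_val]

lemma qg_normal_iff [NeZero n] (hodd : Odd n) (N : Subgroup (QuaternionGroup n)) :
    N.Normal ↔ N = ⊤ ∨ N ≤ zpowers (a 1 : QuaternionGroup n) := by
  have h2n : ((2 * n : ℕ) : ZMod (2 * n)) = 0 := ZMod.natCast_self _
  push_cast at h2n
  constructor
  · intro hN
    by_cases h : N ≤ zpowers (a 1 : QuaternionGroup n)
    · exact Or.inr h
    · left
      obtain ⟨x, hxN, hxZ⟩ := SetLike.not_le_iff_exists.mp h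
      obtain ⟨i, rfl⟩ : ∃ i, x = xa i := by
        cases x with
        | a j => exact absurd ((mem_zpowers_a_iff _).mpr ⟨j, rfl⟩) hxZ
        | xa j => exact ⟨j, rfl⟩
      have h1 : (a (n : ZMod (2 * n)) : QuaternionGroup n) ∈ N := by
        have := N.pow_mem hxN 2
        rwa [xa_sq] at this
      have hconj : (xa (i - 2) : QuaternionGroup n) ∈ N := by
        have := hN.conj_mem _ hxN (a 1)
        rwa [a_mul_xa, a_inv, xa_mul_a, show (i - 1 + -1 : ZMod (2*n)) = i - 2 by ring] at this
      have hneg2 : (a (-2 : ZMod (2 * n)) : QuaternionGroup n) ∈ N := by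
        have := N.mul_mem (N.inv_mem hxN) hconj
        rwa [xa_inv, xa_mul_xa, show ((n : ZMod (2*n)) + (i - 2) - ((n : ZMod (2*n)) + i)) = -2 by ring] at this
      have ha1 : (a 1 : QuaternionGroup n) ∈ N := by
        obtain ⟨k, hk⟩ := hodd
        have := N.mul_mem h1 (N.pow_mem hneg2 k)
        rwa [a_pow, a_mul_a, show ((n : ZMod (2*n)) + (k : ZMod (2*n)) * (-2)) = 1 by
          rw [hk]; push_cast; ring] at this
      have hA : zpowers (a 1 : QuaternionGroup n) ≤ N := zpowers_le.mpr ha1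
      ext g
      simp only [Subgroup.mem_top, iff_true]
      cases g with
      | a j => exact hA ((mem_zpowers_a_iff _).mpr ⟨j, rfl⟩)
      | xa j =>
        have := N.mul_mem hxN (hA ((mem_zpowers_a_iff _).mpr ⟨j - i, rfl⟩))
        rwa [xa_mul_a, add_sub_cancel] at this
  · rintro (rfl | hle)
    · infer_instance
    · constructor
      intro x hx g
      obtain ⟨i, rfl⟩ := (mem_zpowers_a_iff x).mp (hle hx)
      cases g with
      | a j =>
        rw [a_mul_a, a_inv, a_mul_a, show (j + i + -j : ZMod (2*n)) = i by ring]
        exact hx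
      | xa j =>
        rw [xa_mul_a, xa_inv, xa_mul_xa,
          show ((n : ZMod (2*n)) + ((n : ZMod (2*n)) + j) - (j + i)) = -i by linear_combination h2n,
          ← a_inv]
        exact N.inv_mem hx

lemma key_s19 (n : ℕ) (hn : 0 < n) (hodd : Odd n) :
    D (QuaternionGroup n) = ArithmeticFunction.sigma 1 (2 * n) + 4 * n := by
  haveI : NeZero n := ⟨hn.ne'⟩
  haveI : Finite (Subgroup (QuaternionGroup n)) :=
    Finite.of_injective (fun H : Subgroup (QuaternionGroup n) => (H : Set (QuaternionGroup n)))
      SetLike.coe_injective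
  set A : Subgroup (QuaternionGroup n) := zpowers (a 1) with hA
  have hcardA : Nat.card A = 2 * n := by
    rw [hA, Nat.card_zpowers, orderOf_a_one]
  haveI : IsCyclic A := by
    refine ⟨⟨⟨a 1, mem_zpowers _⟩, ?_⟩⟩
    rintro ⟨x, k, rfl⟩
    exact ⟨k, by ext; simp⟩
  have hset : {N : Subgroup (QuaternionGroup n) | N.Normal} = insert ⊤ {N | N ≤ A} := by
    ext N
    simp only [Set.mem_setOf_eq, Set.mem_insert_iff, qg_normal_iff hodd, hA]
  have htop : (⊤ : Subgroup (QuaternionGroup n)) ∉ {N : Subgroup (QuaternionGroup n) | N ≤ A} := by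
    intro h
    obtain ⟨i, hi⟩ := (mem_zpowers_a_iff (xa 0)).mp (h (Subgroup.mem_top _))
    exact absurd hi (by simp)
  have hrange : {N : Subgroup (QuaternionGroup n) | N ≤ A} =
      Set.range (fun K : Subgroup A => K.map A.subtype) := by
    ext N
    constructor
    · intro hle
      exact ⟨N.subgroupOf A, by simp only [subgroupOf_map_subtype, inf_eq_left.mpr (Set.mem_setOf_eq ▸ hle)]⟩
    · rintro ⟨K, rfl⟩
      exact map_subtype_le K
  rw [D, hset, finsum_mem_insert _ htop (Set.toFinite _), hrange,
    finsum_mem_range (map_injective (subtype_injective A))]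
  have hcongr : ∀ K : Subgroup A, Nat.card (K.map A.subtype) = Nat.card K := fun K =>
    (Nat.card_congr (Subgroup.equivMapOfInjective K _ (subtype_injective A)).toEquiv).symm
  rw [finsum_congr hcongr, sum_card_subgroups, hcardA]
  have htopcard : Nat.card (⊤ : Subgroup (QuaternionGroup n)) = 4 * n := by
    rw [Nat.card_congr Subgroup.topEquiv.toEquiv, Nat.card_eq_fintype_card, QuaternionGroup.card]
  rw [htopcard, ArithmeticFunction.sigma_one_apply]
  omega

theorem D_dicyclic_odd (n : ℕ) (hn : 0 < n) (hodd : Odd n) :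
    D (QuaternionGroup n) = ArithmeticFunction.sigma 1 (2 * n) + 4 * n ∧
    (D (QuaternionGroup n) = 2 * (4 * n) ↔ ArithmeticFunction.sigma 1 (2 * n) = 4 * n) ∧
    D (QuaternionGroup 3) = 2 * Nat.card (QuaternionGroup 3) := by
  have h1 := key_s19 n hn hodd
  have h3 := key_s19 3 (by norm_num) (by decide)
  refine ⟨h1, by rw [h1]; omega, ?_⟩
  have hσ : ArithmeticFunction.sigma 1 (2 * 3) = 12 := by
    rw [ArithmeticFunction.sigma_one_apply]
    decide
  have hc : Nat.card (QuaternionGroup 3) = 12 := by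
    rw [Nat.card_eq_fintype_card, QuaternionGroup.card]
  rw [h3, hσ, hc]
end
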